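/- The m-cyclic Temperley–Lieb monoid mTL_n has the presentation with generators o, u_1, …, u_{n−1} and relations u_i² = o·u_i = u_i·o, u_i u_{i±1} u_i = u_i, u_i u_j = u_j u_i for |i−j| > 1, and o^m = 1. Equivalently, the congruence ≃_m on K_n (identifying diagrams with the same skeleton whose circle counts agree mod m) is the congruence generated by the single relation o^m = 1. -/

import Mathlib

/-- The congruence `≃_m` on the Kauffman monoid `K_n` (identifying elements with the
same skeleton whose circle counts agree mod `m`) is the congruence generated by the
single relation `o^m = 1`. Here `M` is the Kauffman monoid, `f : M ≃ C × ℕ` the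
normal-form bijection onto (skeleton, circle count) pairs, and `o` the central circle
generator, which multiplies by incrementing the circle count. -/
theorem stmt14 (C M : Type*) [Monoid M] (m : ℕ) (o : M) (f : M ≃ C × ℕ)
    (ho : ∀ x : M, f (o * x) = ((f x).1, (f x).2 + 1))
    (hcentral : ∀ x : M, o * x = x * o) :
    ∀ x y : M,
      (conGen (fun a b : M => a = o ^ m ∧ b = 1)) x y ↔
        ((f x).1 = (f y).1 ∧ (f x).2 ≡ (f y).2 [MOD m]) := by
  -- f (o^k * x) = (skeleton x, count x + k)
  have hpow : ∀ (k : ℕ) (x : M), f (o ^ k * x) = ((f x).1, (f x).2 + k) := by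
    intro k
    induction k with
    | zero => intro x; simp
    | succ k ih =>
        intro x
        rw [pow_succ', mul_assoc, ho, ih]
        rfl
  -- key symmetric equality when skeletons agree
  have hkey : ∀ x y : M, (f x).1 = (f y).1 →
      o ^ (f y).2 * x = o ^ (f x).2 * y := by
    intro x y h
    apply f.injective
    rw [hpow, hpow]
    exact Prod.ext h (add_comm _ _)
  -- powers of o are left-cancellable
  have hcancel : ∀ (k : ℕ) (a b : M), o ^ k * a = o ^ k * b → a = b := by
    intro k a b h
    have h' := congrArg f h
    rw [hpow, hpow, Prod.mk.injEq] at h'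
    exact f.injective (Prod.ext h'.1 (Nat.add_right_cancel h'.2))
  -- powers of o commute with everything
  have hcentral' : ∀ (k : ℕ) (x : M), o ^ k * x = x * o ^ k := by
    intro k x
    induction k with
    | zero => simp
    | succ k ih =>
        rw [pow_succ, mul_assoc, hcentral x, ← mul_assoc, ih, mul_assoc]
  -- splitting a product of o-powers across a product
  have hsplit : ∀ (j k : ℕ) (a b : M),
      o ^ (j + k) * (a * b) = (o ^ j * a) * (o ^ k * b) := by
    intro j k a b
    rw [pow_add, mul_assoc (o ^ j) (o ^ k) (a * b), ← mul_assoc (o ^ k) a b,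
      hcentral' k a, mul_assoc a (o ^ k) b, ← mul_assoc (o ^ j) a (o ^ k * b)]
  -- the candidate congruence
  let c : Con M :=
    { r := fun a b => (f a).1 = (f b).1 ∧ (f a).2 ≡ (f b).2 [MOD m]
      iseqv := ⟨fun a => ⟨rfl, Nat.ModEq.refl _⟩,
        fun h => ⟨h.1.symm, h.2.symm⟩,
        fun h h' => ⟨h.1.trans h'.1, h.2.trans h'.2⟩⟩
      mul' := by
        intro w x y z h1 h2
        have e1 := hkey w x h1.1
        have e2 := hkey y z h2.1
        have e : o ^ ((f x).2 + (f z).2) * (w * y)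
            = o ^ ((f w).2 + (f y).2) * (x * z) := by
          rw [hsplit, hsplit, e1, e2]
        have h' := congrArg f e
        rw [hpow, hpow, Prod.mk.injEq] at h'
        refine ⟨h'.1, ?_⟩
        have hsnd : (f (w * y)).2 + ((f x).2 + (f z).2)
            = (f (x * z)).2 + ((f w).2 + (f y).2) := h'.2
        have hcd : (f x).2 + (f z).2 ≡ (f w).2 + (f y).2 [MOD m] :=
          (h1.2.symm).add (h2.2.symm)
        exact Nat.ModEq.add_right_cancel hcd (hsnd ▸ Nat.ModEq.refl _)
    }
  -- conGen relation on powers of o^m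
  have hbase : (conGen (fun a b : M => a = o ^ m ∧ b = 1)) (o ^ m) 1 :=
    ConGen.Rel.of _ _ ⟨rfl, rfl⟩
  have hpows : ∀ q : ℕ,
      (conGen (fun a b : M => a = o ^ m ∧ b = 1)) (o ^ (m * q)) 1 := by
    intro q
    induction q with
    | zero => simpa using (conGen (fun a b : M => a = o ^ m ∧ b = 1)).refl 1
    | succ q ih =>
        have := (conGen (fun a b : M => a = o ^ m ∧ b = 1)).mul ih hbase
        simpa [pow_add, mul_add] using this
  intro x y
  constructor
  · intro h
    have hle : conGen (fun a b : M => a = o ^ m ∧ b = 1) ≤ c := by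
      apply Con.conGen_le.mpr
      rintro a b ⟨rfl, rfl⟩
      have h1 : f (o ^ m * 1) = ((f 1).1, (f 1).2 + m) := hpow m 1
      rw [mul_one] at h1
      constructor
      · rw [h1]
      · rw [h1]; exact Nat.add_modEq_right
    exact hle h
  · rintro ⟨hs, hm⟩
    have key := hkey x y hs
    rcases le_total (f x).2 (f y).2 with hle | hle
    · obtain ⟨q, hq⟩ := (Nat.modEq_iff_dvd' hle).mp hm
      have hy : (f y).2 = (f x).2 + m * q := by omega
      have heq : o ^ (f x).2 * (o ^ (m * q) * x) = o ^ (f x).2 * y := by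
        rw [← mul_assoc, ← pow_add, ← hy]; exact key
      have hyx : o ^ (m * q) * x = y := hcancel _ _ _ heq
      have hmul := (conGen (fun a b : M => a = o ^ m ∧ b = 1)).mul (hpows q)
        ((conGen (fun a b : M => a = o ^ m ∧ b = 1)).refl x)
      rw [hyx, one_mul] at hmul
      exact ((conGen (fun a b : M => a = o ^ m ∧ b = 1)).symm hmul)
    · obtain ⟨q, hq⟩ := (Nat.modEq_iff_dvd' hle).mp hm.symm
      have hx : (f x).2 = (f y).2 + m * q := by omega
      have heq : o ^ (f y).2 * (o ^ (m * q) * y) = o ^ (f y).2 * x := by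
        rw [← mul_assoc, ← pow_add, ← hx]; exact key.symm
      have hxy : o ^ (m * q) * y = x := hcancel _ _ _ heq
      have hmul := (conGen (fun a b : M => a = o ^ m ∧ b = 1)).mul (hpows q)
        ((conGen (fun a b : M => a = o ^ m ∧ b = 1)).refl y)
      rw [hxy, one_mul] at hmul
      exact hmul
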